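/- Fix real numbers α, η, β with 1 < α < η < β, and real numbers N > 0, A > 0, B > 0, and set c₀ = ((β−η)/(ηβ)) · N^{β/(β−η)}/B^{η/(β−η)} and t₀ = (N/B)^{1/(β−η)}. Then for every c ≥ 0: if c < c₀ then sup_{t>0} φ_c(t) > 0; if c = c₀ then sup_{t>0} φ_c(t) = 0 and the supremum is attained at t₀; and if c > c₀ then sup_{t>0} φ_c(t) < 0. -/

import Mathlib

/-- The fibering map `φ_c(t) = ((t^η/η)N − (t^β/β)B − c)/((t^α/α)A)` on `(0,∞)`. -/
noncomputable def fib (α η β N A B c : ℝ) : ℝ → ℝ :=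
  fun t => ((t ^ η / η) * N - (t ^ β / β) * B - c) / ((t ^ α / α) * A)

lemma key_ineq {a b p q t : ℝ} (ha : 0 < a) (hab : a < b) (hp : 0 < p) (hq : 0 < q)
    (ht : 0 < t) :
    t ^ a * p / a - t ^ b * q / b ≤ (b - a) / (a * b) * (p ^ (b / (b - a)) / q ^ (a / (b - a))) := by
  have hb : 0 < b := ha.trans hab
  have hba : 0 < b - a := by linarith
  have ha' : a ≠ 0 := ne_of_gt ha
  have hb' : b ≠ 0 := ne_of_gt hb
  have hba' : b - a ≠ 0 := ne_of_gt hba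
  have hconj : (b / a).HolderConjugate (b / (b - a)) := by
    rw [Real.holderConjugate_iff]
    constructor
    · rw [lt_div_iff₀ ha]; linarith
    · field_simp; ring
  have hx : (0:ℝ) ≤ t ^ a * q ^ (a / b) := by positivity
  have hy : (0:ℝ) ≤ p / q ^ (a / b) := by positivity
  have hY := Real.young_inequality_of_nonneg hx hy hconj
  have e0 : t ^ a * q ^ (a / b) * (p / q ^ (a / b)) = t ^ a * p := by
    have : q ^ (a / b) ≠ 0 := ne_of_gt (Real.rpow_pos_of_pos hq _)
    field_simp
  have e1 : (t ^ a * q ^ (a / b)) ^ (b / a) = t ^ b * q := by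
    rw [Real.mul_rpow (by positivity) (by positivity), ← Real.rpow_mul ht.le,
      ← Real.rpow_mul hq.le, show a * (b / a) = b by field_simp,
      show a / b * (b / a) = 1 by field_simp, Real.rpow_one]
  have e2 : (p / q ^ (a / b)) ^ (b / (b - a)) = p ^ (b / (b - a)) / q ^ (a / (b - a)) := by
    rw [Real.div_rpow hp.le (by positivity), ← Real.rpow_mul hq.le,
      show a / b * (b / (b - a)) = a / (b - a) by field_simp]
  rw [e0, e1, e2] at hY
  set P := p ^ (b / (b - a)) / q ^ (a / (b - a)) with hP
  have h2 : t ^ b * q / (b / a) + P / (b / (b - a)) = t ^ b * q * a / b + P * (b - a) / b := by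
    field_simp
  rw [h2] at hY
  rw [sub_le_iff_le_add, div_le_iff₀ ha]
  have e3 : ((b - a) / (a * b) * P + t ^ b * q / b) * a = t ^ b * q * a / b + P * (b - a) / b := by
    field_simp
    ring
  rw [e3]
  exact hY

lemma key_eq {a b p q : ℝ} (ha : 0 < a) (hab : a < b) (hp : 0 < p) (hq : 0 < q) :
    ((p / q) ^ ((1:ℝ) / (b - a))) ^ a * p / a - ((p / q) ^ ((1:ℝ) / (b - a))) ^ b * q / b
      = (b - a) / (a * b) * (p ^ (b / (b - a)) / q ^ (a / (b - a))) := by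
  have hb : 0 < b := ha.trans hab
  have hba : 0 < b - a := by linarith
  have hba' : b - a ≠ 0 := ne_of_gt hba
  have hpq : (0:ℝ) < p / q := div_pos hp hq
  have ea : ((p / q) ^ ((1:ℝ) / (b - a))) ^ a = (p / q) ^ (a / (b - a)) := by
    rw [← Real.rpow_mul hpq.le]; ring_nf
  have eb : ((p / q) ^ ((1:ℝ) / (b - a))) ^ b = (p / q) ^ (a / (b - a)) * (p / q) := by
    rw [← Real.rpow_mul hpq.le, show (1:ℝ) / (b - a) * b = a / (b - a) + 1 by field_simp; ring,
      Real.rpow_add hpq, Real.rpow_one]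
  have er : p ^ (b / (b - a)) = p ^ (a / (b - a)) * p := by
    rw [show b / (b - a) = a / (b - a) + 1 by field_simp; ring, Real.rpow_add hp, Real.rpow_one]
  have ediv : (p / q) ^ (a / (b - a)) = p ^ (a / (b - a)) / q ^ (a / (b - a)) :=
    Real.div_rpow hp.le hq.le _
  rw [ea, eb, er, ediv]
  have h1 : q ^ (a / (b - a)) ≠ 0 := ne_of_gt (Real.rpow_pos_of_pos hq _)
  field_simp

/-- For `N, A, B > 0`, `c₀ = ((β−η)/(ηβ))·N^{β/(β−η)}/B^{η/(β−η)}`,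
`t₀ = (N/B)^{1/(β−η)}`, and any `c ≥ 0`: if `c < c₀` then `sup_{t>0} φ_c(t) > 0`;
if `c = c₀` then `sup_{t>0} φ_c(t) = 0`, attained at `t₀`; and if `c > c₀` then
`sup_{t>0} φ_c(t) < 0`. -/
theorem stmt12 (α η β N A B : ℝ) (h1 : 1 < α) (h2 : α < η) (h3 : η < β)
    (hN : 0 < N) (hA : 0 < A) (hB : 0 < B) (c : ℝ) (hc : 0 ≤ c) :
    (c < (β - η) / (η * β) * (N ^ (β / (β - η)) / B ^ (η / (β - η))) →
      0 < sSup {x : ℝ | ∃ t : ℝ, 0 < t ∧ x = fib α η β N A B c t}) ∧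
    (c = (β - η) / (η * β) * (N ^ (β / (β - η)) / B ^ (η / (β - η))) →
      sSup {x : ℝ | ∃ t : ℝ, 0 < t ∧ x = fib α η β N A B c t} = 0 ∧
      fib α η β N A B c ((N / B) ^ ((1 : ℝ) / (β - η))) =
        sSup {x : ℝ | ∃ t : ℝ, 0 < t ∧ x = fib α η β N A B c t}) ∧
    ((β - η) / (η * β) * (N ^ (β / (β - η)) / B ^ (η / (β - η))) < c →
      sSup {x : ℝ | ∃ t : ℝ, 0 < t ∧ x = fib α η β N A B c t} < 0) := by
  have hα : 0 < α := by linarith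
  have hη : 0 < η := by linarith
  have hβ : 0 < β := by linarith
  have hηα : 0 < η - α := by linarith
  have hβη : 0 < β - η := by linarith
  have hη' : η ≠ 0 := ne_of_gt hη
  have hβ' : β ≠ 0 := ne_of_gt hβ
  have hα' : α ≠ 0 := ne_of_gt hα
  have hA' : A ≠ 0 := ne_of_gt hA
  set c0 : ℝ := (β - η) / (η * β) * (N ^ (β / (β - η)) / B ^ (η / (β - η))) with hc0def
  set t0 : ℝ := (N / B) ^ ((1 : ℝ) / (β - η)) with ht0def
  set S : Set ℝ := {x : ℝ | ∃ t : ℝ, 0 < t ∧ x = fib α η β N A B c t} with hSdef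
  have ht0 : 0 < t0 := Real.rpow_pos_of_pos (div_pos hN hB) _
  have hden : ∀ t : ℝ, 0 < t → 0 < t ^ α / α * A := fun t ht => by positivity
  have fib_eq : ∀ t : ℝ, fib α η β N A B c t
      = (t ^ η / η * N - t ^ β / β * B - c) / (t ^ α / α * A) := fun t => rfl
  have key1 : ∀ t : ℝ, 0 < t → t ^ η / η * N - t ^ β / β * B ≤ c0 := by
    intro t ht
    have h := key_ineq hη h3 hN hB ht
    have e : t ^ η / η * N - t ^ β / β * B = t ^ η * N / η - t ^ β * B / β := by ring
    rw [hc0def, e]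
    exact h
  have key2 : t0 ^ η / η * N - t0 ^ β / β * B = c0 := by
    have h := key_eq hη h3 hN hB
    have e : t0 ^ η / η * N - t0 ^ β / β * B = t0 ^ η * N / η - t0 ^ β * B / β := by ring
    rw [e, ht0def, hc0def]
    exact h
  have hne : S.Nonempty := ⟨fib α η β N A B c 1, 1, one_pos, rfl⟩
  -- bounded above
  obtain ⟨Mk, hMk⟩ : ∃ M : ℝ, ∀ t : ℝ, 0 < t →
      t ^ (η - α) * (N * (η - α) / η) / (η - α) - t ^ (β - α) * (B * (β - α) / β) / (β - α) ≤ M :=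
    ⟨_, fun t ht => key_ineq hηα (by linarith) (div_pos (mul_pos hN hηα) hη)
      (div_pos (mul_pos hB (by linarith)) hβ) ht⟩
  have hub : ∀ x ∈ S, x ≤ α / A * Mk := by
    rintro x ⟨t, ht, rfl⟩
    have hk := hMk t ht
    rw [Real.rpow_sub ht η α, Real.rpow_sub ht β α] at hk
    have htα : (0:ℝ) < t ^ α := Real.rpow_pos_of_pos ht α
    have htα' : t ^ α ≠ 0 := ne_of_gt htα
    rw [fib_eq, div_le_iff₀ (hden t ht)]
    have e3 : α / A * Mk * (t ^ α / α * A) = Mk * t ^ α := by field_simp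
    rw [e3]
    have hk2 : t ^ η / η * N - t ^ β / β * B ≤ Mk * t ^ α := by
      have h5 := mul_le_mul_of_nonneg_right hk htα.le
      have e4 : (t ^ η / t ^ α * (N * (η - α) / η) / (η - α)
          - t ^ β / t ^ α * (B * (β - α) / β) / (β - α)) * t ^ α
          = t ^ η / η * N - t ^ β / β * B := by
        have hηα' : η - α ≠ 0 := ne_of_gt hηα
        have hβα' : β - α ≠ 0 := ne_of_gt (by linarith : (0:ℝ) < β - α)
        field_simp
      rw [e4] at h5
      exact h5
    linarith
  have hbdd : BddAbove S := ⟨α / A * Mk, hub⟩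
  refine ⟨fun hlt => ?_, fun heq => ?_, fun hgt => ?_⟩
  · -- c < c0
    have hmem : fib α η β N A B c t0 ∈ S := ⟨t0, ht0, rfl⟩
    have hpos : 0 < fib α η β N A B c t0 := by
      rw [fib_eq]
      apply div_pos _ (hden t0 ht0)
      linarith [key2]
    exact lt_of_lt_of_le hpos (le_csSup hbdd hmem)
  · -- c = c0
    have hzero : fib α η β N A B c t0 = 0 := by
      rw [fib_eq, div_eq_zero_iff]
      left
      linarith [key2]
    have hmem : (0:ℝ) ∈ S := ⟨t0, ht0, hzero.symm⟩
    have hle : ∀ x ∈ S, x ≤ 0 := by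
      rintro x ⟨t, ht, rfl⟩
      rw [fib_eq]
      apply div_nonpos_of_nonpos_of_nonneg _ (hden t ht).le
      linarith [key1 t ht]
    have hSup : sSup S = 0 := le_antisymm (csSup_le hne hle) (le_csSup hbdd hmem)
    exact ⟨hSup, by rw [hSup, hzero]⟩
  · -- c0 < c
    obtain ⟨K2, hK2, hK2pos⟩ : ∃ K : ℝ, (∀ t : ℝ, 0 < t →
        t ^ η * N / η - t ^ β * (B / 2) / β ≤ K) ∧ 0 < K :=
      ⟨_, fun t ht => key_ineq hη h3 hN (half_pos hB) ht,
        mul_pos (div_pos hβη (mul_pos hη hβ))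
          (div_pos (Real.rpow_pos_of_pos hN _) (Real.rpow_pos_of_pos (half_pos hB) _))⟩
    set T : ℝ := max 1 ((4 * β * K2 / B) ^ ((1:ℝ) / β)) with hTdef
    have hT1 : (1:ℝ) ≤ T := le_max_left _ _
    have hT0 : (0:ℝ) < T := lt_of_lt_of_le one_pos hT1
    have hTβ : 4 * β * K2 / B ≤ T ^ β := by
      have h4 : (0:ℝ) ≤ 4 * β * K2 / B := by positivity
      calc 4 * β * K2 / B = ((4 * β * K2 / B) ^ ((1:ℝ) / β)) ^ β := by
            rw [← Real.rpow_mul h4, one_div_mul_cancel hβ', Real.rpow_one]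
        _ ≤ T ^ β := Real.rpow_le_rpow (Real.rpow_nonneg h4 _) (le_max_right _ _) hβ.le
    have hε : 0 < c - c0 := by linarith
    set δ : ℝ := min ((c - c0) / (T ^ α / α * A)) (α * B / (4 * β * A)) with hδdef
    have hδpos : 0 < δ := lt_min (div_pos hε (hden T hT0)) (by positivity)
    have hub2 : ∀ x ∈ S, x ≤ -δ := by
      rintro x ⟨t, ht, rfl⟩
      rw [fib_eq]
      have htα : (0:ℝ) < t ^ α := Real.rpow_pos_of_pos ht α
      have htα' : t ^ α ≠ 0 := ne_of_gt htα
      rcases le_total t T with hcase | hcase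
      · have hnum : t ^ η / η * N - t ^ β / β * B - c ≤ -(c - c0) := by linarith [key1 t ht]
        have hden_le : t ^ α / α * A ≤ T ^ α / α * A := by
          gcongr
        calc (t ^ η / η * N - t ^ β / β * B - c) / (t ^ α / α * A)
            ≤ (-(c - c0)) / (t ^ α / α * A) := by
              gcongr
          _ ≤ (-(c - c0)) / (T ^ α / α * A) := by
              rw [neg_div, neg_div, neg_le_neg_iff]
              gcongr
          _ ≤ -δ := by
              rw [neg_div, neg_le_neg_iff]
              exact min_le_left _ _
      · have h1t : (1:ℝ) ≤ t := le_trans hT1 hcase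
        have htβ' : 4 * β * K2 / B ≤ t ^ β :=
          le_trans hTβ (Real.rpow_le_rpow hT0.le hcase hβ.le)
        have hK2t : K2 ≤ t ^ β * B / (4 * β) := by
          rw [div_le_iff₀ hB] at htβ'
          rw [le_div_iff₀ (by positivity)]
          linarith
        have hnum : t ^ η / η * N - t ^ β / β * B - c ≤ -(t ^ β * B / (4 * β)) := by
          have h6 := hK2 t ht
          have e5 : t ^ η / η * N - t ^ β / β * B
              = (t ^ η * N / η - t ^ β * (B / 2) / β) - t ^ β * B / (2 * β) := by
            field_simp
            ring
          have e6 : t ^ β * B / (2 * β) = 2 * (t ^ β * B / (4 * β)) := by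
            field_simp
            ring
          rw [e5, e6]
          linarith
        calc (t ^ η / η * N - t ^ β / β * B - c) / (t ^ α / α * A)
            ≤ (-(t ^ β * B / (4 * β))) / (t ^ α / α * A) := by
              gcongr
          _ = -(α * B / (4 * β * A) * t ^ (β - α)) := by
              rw [Real.rpow_sub ht]
              field_simp
          _ ≤ -(α * B / (4 * β * A)) := by
              have h7 : (1:ℝ) ≤ t ^ (β - α) := Real.one_le_rpow h1t (by linarith)
              have h8 : (0:ℝ) < α * B / (4 * β * A) := by positivity
              nlinarith
          _ ≤ -δ := neg_le_neg (min_le_right _ _)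
    have hle : sSup S ≤ -δ := csSup_le hne hub2
    linarith
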